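/- For all (f,u), (g,v), (h,w) ∈ g̃ and all c₁, c₂ ∈ ℂ, set P = f·g_x − f_x·g + c₂·f_y and Q = f·v_x + 2·f_x·v − u_x·g − 2·u·g_x + c₁·f_{xxx} + c₂·u_y (the coadjoint action formula âd*_{(f,u)}(g,v) = (P,Q)). Then ∫₀^{2π}∫₀^{2π} (h·Q + P·w) dx dy + ∫₀^{2π}∫₀^{2π} [ (f·h_x − f_x·h)·v + g·(f·w_x + 2·f_x·w − h·u_x − 2·h_x·u) ] dx dy + c₁·∫₀^{2π}∫₀^{2π} f·h_{xxx} dx dy + c₂·∫₀^{2π}∫₀^{2π} (f·w_y − h·u_y) dx dy = 0. That is, formula (P,Q) gives the coadjoint action of the centrally extended Lie algebra ĝ with central charges (c₁,c₂): ⟨âd*_a m, b⟩ = −⟨m,[a,b]⟩ − c₁·μ₁(a,b) − c₂·μ₂(a,b). -/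

import Mathlib

open Real intervalIntegral
open scoped ContDiff

noncomputable section

/-- Functions on `ℝ²` (representing functions on the 2-torus `S¹ × S¹`). -/
abbrev F2 : Type := ℝ × ℝ → ℂ

/-- `C∞₂π(ℝ²,ℂ)`: smooth functions `ℝ² → ℂ` which are `2π`-periodic in each variable. -/
def SmoothPer2 (f : F2) : Prop :=
  ContDiff ℝ ∞ f ∧ (∀ p : ℝ × ℝ, f (p.1 + 2 * π, p.2) = f p)
    ∧ (∀ p : ℝ × ℝ, f (p.1, p.2 + 2 * π) = f p)

/-- Partial derivative in the first variable `x`. -/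
def pdx (f : F2) : F2 := fun p => deriv (fun t => f (t, p.2)) p.1

/-- Partial derivative in the second variable `y`. -/
def pdy (f : F2) : F2 := fun p => deriv (fun t => f (p.1, t)) p.2

/-- Double integral `∫₀^{2π}∫₀^{2π} f dx dy` over the torus. -/
def integ2 (f : F2) : ℂ := ∫ y in (0:ℝ)..(2 * π), ∫ x in (0:ℝ)..(2 * π), f (x, y)

/-- Membership in the looped cotangent Virasoro algebra `g̃`: a pair `(f,u)` of
functions in `C∞₂π(ℝ²,ℂ)`, `f` representing the loop of vector fields `f(x,y)·∂/∂x`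
and `u` the loop of quadratic differentials `u(x,y)·dx²`. -/
def MemG (a : F2 × F2) : Prop := SmoothPer2 a.1 ∧ SmoothPer2 a.2

/-- The Lie bracket of the looped cotangent Virasoro algebra `g̃ = L(Vect(S¹) ⋉ F₂)`:
`[(f,u),(g,v)] = (f·g_x − f_x·g, f·v_x + 2·f_x·v − g·u_x − 2·g_x·u)`. -/
def gBracket (a b : F2 × F2) : F2 × F2 :=
  (fun p => a.1 p * pdx b.1 p - pdx a.1 p * b.1 p,
   fun p => a.1 p * pdx b.2 p + 2 * pdx a.1 p * b.2 p
     - b.1 p * pdx a.2 p - 2 * pdx b.1 p * a.2 p)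

/-! ### Auxiliary lemmas -/

section Aux

open MeasureTheory

lemma diff_sliceX {F : F2} (hF : ContDiff ℝ ∞ F) (y x : ℝ) :
    DifferentiableAt ℝ (fun t => F (t, y)) x :=
  ((hF.differentiable (by simp)) (x, y)).comp x
    (DifferentiableAt.prodMk differentiableAt_id (differentiableAt_const y))

lemma diff_sliceY {F : F2} (hF : ContDiff ℝ ∞ F) (x y : ℝ) :
    DifferentiableAt ℝ (fun t => F (x, t)) y :=
  ((hF.differentiable (by simp)) (x, y)).comp y
    (DifferentiableAt.prodMk (differentiableAt_const x) differentiableAt_id)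

lemma sliceX_hasDerivAt {F : F2} (hF : ContDiff ℝ ∞ F) (x y : ℝ) :
    HasDerivAt (fun t => F (t, y)) (pdx F (x, y)) x :=
  (diff_sliceX hF y x).hasDerivAt

lemma sliceY_hasDerivAt {F : F2} (hF : ContDiff ℝ ∞ F) (x y : ℝ) :
    HasDerivAt (fun t => F (x, t)) (pdy F (x, y)) y :=
  (diff_sliceY hF x y).hasDerivAt

lemma pdx_contDiff {F : F2} (hF : ContDiff ℝ ∞ F) : ContDiff ℝ ∞ (pdx F) := by
  have h1 : ContDiff ℝ ∞ (fun p : ℝ × ℝ => fderiv ℝ F p (1, 0)) :=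
    (hF.fderiv_right (by norm_num)).clm_apply contDiff_const
  have h2 : pdx F = fun p : ℝ × ℝ => fderiv ℝ F p (1, 0) := by
    funext p
    have hline : HasDerivAt (fun t : ℝ => (t, p.2)) ((1 : ℝ), (0 : ℝ)) p.1 :=
      HasDerivAt.prodMk (hasDerivAt_id p.1) (hasDerivAt_const p.1 p.2)
    have hd : HasFDerivAt F (fderiv ℝ F p) p :=
      ((hF.differentiable (by simp)) p).hasFDerivAt
    exact (hd.comp_hasDerivAt p.1 (by simpa using hline)).deriv
  rw [h2]; exact h1

lemma pdy_contDiff {F : F2} (hF : ContDiff ℝ ∞ F) : ContDiff ℝ ∞ (pdy F) := by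
  have h1 : ContDiff ℝ ∞ (fun p : ℝ × ℝ => fderiv ℝ F p (0, 1)) :=
    (hF.fderiv_right (by norm_num)).clm_apply contDiff_const
  have h2 : pdy F = fun p : ℝ × ℝ => fderiv ℝ F p (0, 1) := by
    funext p
    have hline : HasDerivAt (fun t : ℝ => (p.1, t)) ((0 : ℝ), (1 : ℝ)) p.2 :=
      HasDerivAt.prodMk (hasDerivAt_const p.2 p.1) (hasDerivAt_id p.2)
    have hd : HasFDerivAt F (fderiv ℝ F p) p :=
      ((hF.differentiable (by simp)) p).hasFDerivAt
    exact (hd.comp_hasDerivAt p.2 (by simpa using hline)).deriv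
  rw [h2]; exact h1

lemma pdx_perX {F : F2} (hper : ∀ p : ℝ × ℝ, F (p.1 + 2 * π, p.2) = F p) (p : ℝ × ℝ) :
    pdx F (p.1 + 2 * π, p.2) = pdx F p := by
  have h1 : (fun t => F (t + 2 * π, p.2)) = fun t => F (t, p.2) :=
    funext fun t => hper (t, p.2)
  show deriv (fun t => F (t, p.2)) (p.1 + 2 * π) = deriv (fun t => F (t, p.2)) p.1
  rw [← deriv_comp_add_const, h1]

lemma integ2_add {F G : F2} (hF : Continuous F) (hG : Continuous G) :
    integ2 (fun p => F p + G p) = integ2 F + integ2 G := by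
  unfold integ2
  have inner : ∀ y : ℝ, (∫ x in (0:ℝ)..(2*π), (F (x, y) + G (x, y)))
      = (∫ x in (0:ℝ)..(2*π), F (x, y)) + ∫ x in (0:ℝ)..(2*π), G (x, y) := by
    intro y
    exact intervalIntegral.integral_add
      ((hF.comp (by fun_prop)).intervalIntegrable _ _)
      ((hG.comp (by fun_prop)).intervalIntegrable _ _)
  simp_rw [inner]
  exact intervalIntegral.integral_add
    ((intervalIntegral.continuous_parametric_intervalIntegral_of_continuous'
        (f := fun y x => F (x, y)) (hF.comp continuous_swap) 0 (2*π)).intervalIntegrable _ _)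
    ((intervalIntegral.continuous_parametric_intervalIntegral_of_continuous'
        (f := fun y x => G (x, y)) (hG.comp continuous_swap) 0 (2*π)).intervalIntegrable _ _)

lemma integ2_smul {F : F2} (c : ℂ) : integ2 (fun p => c * F p) = c * integ2 F := by
  unfold integ2
  simp_rw [← smul_eq_mul, intervalIntegral.integral_smul]

lemma integ2_pdx_zero {F : F2} (hF : ContDiff ℝ ∞ F)
    (hper : ∀ p : ℝ × ℝ, F (p.1 + 2 * π, p.2) = F p) : integ2 (pdx F) = 0 := by
  unfold integ2
  have inner : ∀ y : ℝ, (∫ x in (0:ℝ)..(2*π), pdx F (x, y)) = 0 := by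
    intro y
    have hcont : Continuous (fun x : ℝ => pdx F (x, y)) :=
      (pdx_contDiff hF).continuous.comp (continuous_id.prodMk continuous_const)
    have h1 : (∫ x in (0:ℝ)..(2*π), pdx F (x, y)) = F (2*π, y) - F (0, y) :=
      intervalIntegral.integral_eq_sub_of_hasDerivAt
        (fun x _ => sliceX_hasDerivAt hF x y) (hcont.intervalIntegrable _ _)
    have h2 : F (2*π, y) = F (0, y) := by simpa using hper (0, y)
    rw [h1, h2, sub_self]
  simp_rw [inner]
  simp

lemma integ2_pdy_zero {F : F2} (hF : ContDiff ℝ ∞ F)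
    (hper : ∀ p : ℝ × ℝ, F (p.1, p.2 + 2 * π) = F p) : integ2 (pdy F) = 0 := by
  have h2pi : (0:ℝ) ≤ 2 * π := by positivity
  have hc : Continuous (pdy F) := (pdy_contDiff hF).continuous
  have hint : Integrable (Function.uncurry fun y x => pdy F (x, y))
      ((volume.restrict (Set.Ioc (0:ℝ) (2*π))).prod (volume.restrict (Set.Ioc (0:ℝ) (2*π)))) := by
    rw [Measure.prod_restrict]
    exact (((hc.comp continuous_swap).continuousOn).integrableOn_compact
      (isCompact_Icc.prod isCompact_Icc)).mono_set
      (Set.prod_mono Set.Ioc_subset_Icc_self Set.Ioc_subset_Icc_self)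
  unfold integ2
  rw [intervalIntegral.integral_of_le h2pi]
  simp_rw [intervalIntegral.integral_of_le h2pi]
  rw [MeasureTheory.integral_integral_swap hint]
  have inner : ∀ x : ℝ, (∫ y in Set.Ioc (0:ℝ) (2*π), pdy F (x, y)) = 0 := by
    intro x
    rw [← intervalIntegral.integral_of_le h2pi]
    have hcont : Continuous (fun y : ℝ => pdy F (x, y)) :=
      hc.comp (continuous_const.prodMk continuous_id)
    have h1 : (∫ y in (0:ℝ)..(2*π), pdy F (x, y)) = F (x, 2*π) - F (x, 0) :=
      intervalIntegral.integral_eq_sub_of_hasDerivAt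
        (fun y _ => sliceY_hasDerivAt hF x y) (hcont.intervalIntegrable _ _)
    have h2 : F (x, 2*π) = F (x, 0) := by simpa using hper (x, 0)
    rw [h1, h2, sub_self]
  simp_rw [inner]
  simp

/-- The potential whose `x`-derivative captures the non-`c₂` part of the pairing identity. -/
def Gfun (c₁ : ℂ) (f u g v h w : F2) : F2 := fun p =>
  f p * (h p * v p) + f p * (g p * w p) - 2 * (g p * (h p * u p))
    + c₁ * (h p * pdx (pdx f) p - pdx h p * pdx f p + pdx (pdx h) p * f p)

/-- The potential whose `y`-derivative captures the `c₂` part of the pairing identity. -/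
def Hfun (f w : F2) : F2 := fun p => f p * w p

end Aux

/-- **The coadjoint action of the centrally extended algebra `ĝ`.**
With `P = f·g_x − f_x·g + c₂·f_y` and
`Q = f·v_x + 2·f_x·v − u_x·g − 2·u·g_x + c₁·f_{xxx} + c₂·u_y`
(the formula `âd*_{(f,u)}(g,v) = (P,Q)`), one has, for every test element `(h,w)` of `g̃`,
`⟨(P,Q),(h,w)⟩ + ⟨(g,v),[(f,u),(h,w)]⟩ + c₁·μ₁((f,u),(h,w)) + c₂·μ₂((f,u),(h,w)) = 0`,
i.e. `⟨âd*_a m, b⟩ = −⟨m,[a,b]⟩ − c₁·μ₁(a,b) − c₂·μ₂(a,b)`. -/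
theorem coadjoint_action_of_extended_algebra (c₁ c₂ : ℂ) (f u g v h w P Q : F2)
    (hf : SmoothPer2 f) (hu : SmoothPer2 u) (hg : SmoothPer2 g) (hv : SmoothPer2 v)
    (hh : SmoothPer2 h) (hw : SmoothPer2 w)
    (hP : P = fun p => f p * pdx g p - pdx f p * g p + c₂ * pdy f p)
    (hQ : Q = fun p => f p * pdx v p + 2 * pdx f p * v p - pdx u p * g p
      - 2 * u p * pdx g p + c₁ * pdx (pdx (pdx f)) p + c₂ * pdy u p) :
    integ2 (fun p => h p * Q p + P p * w p)
      + integ2 (fun p => (f p * pdx h p - pdx f p * h p) * v p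
          + g p * (f p * pdx w p + 2 * pdx f p * w p - h p * pdx u p - 2 * pdx h p * u p))
      + c₁ * integ2 (fun p => f p * pdx (pdx (pdx h)) p)
      + c₂ * integ2 (fun p => f p * pdy w p - h p * pdy u p) = 0 := by
  subst hP hQ
  beta_reduce
  -- continuity facts
  have hcf : Continuous f := hf.1.continuous
  have hcu : Continuous u := hu.1.continuous
  have hcg : Continuous g := hg.1.continuous
  have hcv : Continuous v := hv.1.continuous
  have hch : Continuous h := hh.1.continuous
  have hcw : Continuous w := hw.1.continuous
  have hsfx : ContDiff ℝ ∞ (pdx f) := pdx_contDiff hf.1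
  have hsfxx : ContDiff ℝ ∞ (pdx (pdx f)) := pdx_contDiff hsfx
  have hsfxxx : ContDiff ℝ ∞ (pdx (pdx (pdx f))) := pdx_contDiff hsfxx
  have hshx : ContDiff ℝ ∞ (pdx h) := pdx_contDiff hh.1
  have hshxx : ContDiff ℝ ∞ (pdx (pdx h)) := pdx_contDiff hshx
  have hshxxx : ContDiff ℝ ∞ (pdx (pdx (pdx h))) := pdx_contDiff hshxx
  have hcfx : Continuous (pdx f) := hsfx.continuous
  have hcfxxx : Continuous (pdx (pdx (pdx f))) := hsfxxx.continuous
  have hcgx : Continuous (pdx g) := (pdx_contDiff hg.1).continuous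
  have hcux : Continuous (pdx u) := (pdx_contDiff hu.1).continuous
  have hcvx : Continuous (pdx v) := (pdx_contDiff hv.1).continuous
  have hchx : Continuous (pdx h) := hshx.continuous
  have hchxxx : Continuous (pdx (pdx (pdx h))) := hshxxx.continuous
  have hcwx : Continuous (pdx w) := (pdx_contDiff hw.1).continuous
  have hcfy : Continuous (pdy f) := (pdy_contDiff hf.1).continuous
  have hcuy : Continuous (pdy u) := (pdy_contDiff hu.1).continuous
  have hcwy : Continuous (pdy w) := (pdy_contDiff hw.1).continuous
  -- continuity of the four integrands
  have hA1 : Continuous (fun p : ℝ × ℝ => h p * (f p * pdx v p + 2 * pdx f p * v p - pdx u p * g p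
      - 2 * u p * pdx g p + c₁ * pdx (pdx (pdx f)) p + c₂ * pdy u p)
      + (f p * pdx g p - pdx f p * g p + c₂ * pdy f p) * w p) := by
    have hX : Continuous (fun p : ℝ × ℝ => f p * pdx v p + 2 * pdx f p * v p - pdx u p * g p
        - 2 * u p * pdx g p + c₁ * pdx (pdx (pdx f)) p + c₂ * pdy u p) :=
      (((((hcf.mul hcvx).add ((continuous_const.mul hcfx).mul hcv)).sub
        (hcux.mul hcg)).sub ((continuous_const.mul hcu).mul hcgx)).add
        (continuous_const.mul hcfxxx)).add (continuous_const.mul hcuy)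
    exact (hch.mul hX).add
      ((((hcf.mul hcgx).sub (hcfx.mul hcg)).add (continuous_const.mul hcfy)).mul hcw)
  have hA2 : Continuous (fun p : ℝ × ℝ => (f p * pdx h p - pdx f p * h p) * v p
      + g p * (f p * pdx w p + 2 * pdx f p * w p - h p * pdx u p - 2 * pdx h p * u p)) :=
    (((hcf.mul hchx).sub (hcfx.mul hch)).mul hcv).add
      (hcg.mul ((((hcf.mul hcwx).add ((continuous_const.mul hcfx).mul hcw)).sub
        (hch.mul hcux)).sub ((continuous_const.mul hchx).mul hcu)))
  have hA3 : Continuous (fun p : ℝ × ℝ => f p * pdx (pdx (pdx h)) p) := hcf.mul hchxxx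
  have hA4 : Continuous (fun p : ℝ × ℝ => f p * pdy w p - h p * pdy u p) :=
    (hcf.mul hcwy).sub (hch.mul hcuy)
  -- combine the four integrals into a single one
  have e_a : integ2 (fun p : ℝ × ℝ =>
      (h p * (f p * pdx v p + 2 * pdx f p * v p - pdx u p * g p
          - 2 * u p * pdx g p + c₁ * pdx (pdx (pdx f)) p + c₂ * pdy u p)
        + (f p * pdx g p - pdx f p * g p + c₂ * pdy f p) * w p)
      + ((f p * pdx h p - pdx f p * h p) * v p
        + g p * (f p * pdx w p + 2 * pdx f p * w p - h p * pdx u p - 2 * pdx h p * u p)))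
      = integ2 (fun p : ℝ × ℝ => h p * (f p * pdx v p + 2 * pdx f p * v p - pdx u p * g p
          - 2 * u p * pdx g p + c₁ * pdx (pdx (pdx f)) p + c₂ * pdy u p)
          + (f p * pdx g p - pdx f p * g p + c₂ * pdy f p) * w p)
        + integ2 (fun p : ℝ × ℝ => (f p * pdx h p - pdx f p * h p) * v p
          + g p * (f p * pdx w p + 2 * pdx f p * w p - h p * pdx u p - 2 * pdx h p * u p)) :=
    integ2_add hA1 hA2
  have e_b : integ2 (fun p : ℝ × ℝ =>
      ((h p * (f p * pdx v p + 2 * pdx f p * v p - pdx u p * g p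
          - 2 * u p * pdx g p + c₁ * pdx (pdx (pdx f)) p + c₂ * pdy u p)
        + (f p * pdx g p - pdx f p * g p + c₂ * pdy f p) * w p)
      + ((f p * pdx h p - pdx f p * h p) * v p
        + g p * (f p * pdx w p + 2 * pdx f p * w p - h p * pdx u p - 2 * pdx h p * u p)))
      + c₁ * (f p * pdx (pdx (pdx h)) p))
      = integ2 (fun p : ℝ × ℝ =>
        (h p * (f p * pdx v p + 2 * pdx f p * v p - pdx u p * g p
            - 2 * u p * pdx g p + c₁ * pdx (pdx (pdx f)) p + c₂ * pdy u p)
          + (f p * pdx g p - pdx f p * g p + c₂ * pdy f p) * w p)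
        + ((f p * pdx h p - pdx f p * h p) * v p
          + g p * (f p * pdx w p + 2 * pdx f p * w p - h p * pdx u p - 2 * pdx h p * u p)))
        + integ2 (fun p : ℝ × ℝ => c₁ * (f p * pdx (pdx (pdx h)) p)) :=
    integ2_add (hA1.add hA2) (continuous_const.mul hA3)
  have e_c : integ2 (fun p : ℝ × ℝ =>
      (((h p * (f p * pdx v p + 2 * pdx f p * v p - pdx u p * g p
          - 2 * u p * pdx g p + c₁ * pdx (pdx (pdx f)) p + c₂ * pdy u p)
        + (f p * pdx g p - pdx f p * g p + c₂ * pdy f p) * w p)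
      + ((f p * pdx h p - pdx f p * h p) * v p
        + g p * (f p * pdx w p + 2 * pdx f p * w p - h p * pdx u p - 2 * pdx h p * u p)))
      + c₁ * (f p * pdx (pdx (pdx h)) p))
      + c₂ * (f p * pdy w p - h p * pdy u p))
      = integ2 (fun p : ℝ × ℝ =>
        ((h p * (f p * pdx v p + 2 * pdx f p * v p - pdx u p * g p
            - 2 * u p * pdx g p + c₁ * pdx (pdx (pdx f)) p + c₂ * pdy u p)
          + (f p * pdx g p - pdx f p * g p + c₂ * pdy f p) * w p)
        + ((f p * pdx h p - pdx f p * h p) * v p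
          + g p * (f p * pdx w p + 2 * pdx f p * w p - h p * pdx u p - 2 * pdx h p * u p)))
        + c₁ * (f p * pdx (pdx (pdx h)) p))
        + integ2 (fun p : ℝ × ℝ => c₂ * (f p * pdy w p - h p * pdy u p)) :=
    integ2_add ((hA1.add hA2).add (continuous_const.mul hA3)) (continuous_const.mul hA4)
  have e_s1 : integ2 (fun p : ℝ × ℝ => c₁ * (f p * pdx (pdx (pdx h)) p))
      = c₁ * integ2 (fun p : ℝ × ℝ => f p * pdx (pdx (pdx h)) p) := integ2_smul c₁
  have e_s2 : integ2 (fun p : ℝ × ℝ => c₂ * (f p * pdy w p - h p * pdy u p))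
      = c₂ * integ2 (fun p : ℝ × ℝ => f p * pdy w p - h p * pdy u p) := integ2_smul c₂
  rw [← e_s2, ← e_s1, ← e_a, ← e_b, ← e_c]
  -- the combined integrand is an exact form
  have key : (fun p : ℝ × ℝ =>
      (((h p * (f p * pdx v p + 2 * pdx f p * v p - pdx u p * g p
          - 2 * u p * pdx g p + c₁ * pdx (pdx (pdx f)) p + c₂ * pdy u p)
        + (f p * pdx g p - pdx f p * g p + c₂ * pdy f p) * w p)
      + ((f p * pdx h p - pdx f p * h p) * v p
        + g p * (f p * pdx w p + 2 * pdx f p * w p - h p * pdx u p - 2 * pdx h p * u p)))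
      + c₁ * (f p * pdx (pdx (pdx h)) p))
      + c₂ * (f p * pdy w p - h p * pdy u p))
      = fun p : ℝ × ℝ => pdx (Gfun c₁ f u g v h w) p + c₂ * pdy (Hfun f w) p := by
    funext p
    obtain ⟨x, y⟩ := p
    have Hf := sliceX_hasDerivAt hf.1 x y
    have Hg := sliceX_hasDerivAt hg.1 x y
    have Hh := sliceX_hasDerivAt hh.1 x y
    have Hu := sliceX_hasDerivAt hu.1 x y
    have Hv := sliceX_hasDerivAt hv.1 x y
    have Hw := sliceX_hasDerivAt hw.1 x y
    have Hfx := sliceX_hasDerivAt hsfx x y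
    have Hfxx := sliceX_hasDerivAt hsfxx x y
    have Hhx := sliceX_hasDerivAt hshx x y
    have Hhxx := sliceX_hasDerivAt hshxx x y
    have hG : pdx (Gfun c₁ f u g v h w) (x, y) = _ :=
      ((((Hf.mul (Hh.mul Hv)).add (Hf.mul (Hg.mul Hw))).sub
          (HasDerivAt.const_mul 2 (Hg.mul (Hh.mul Hu)))).add
        (HasDerivAt.const_mul c₁ (((Hh.mul Hfxx).sub (Hhx.mul Hfx)).add
          (Hhxx.mul Hf)))).deriv
    have hH : pdy (Hfun f w) (x, y) = _ :=
      ((sliceY_hasDerivAt hf.1 x y).mul (sliceY_hasDerivAt hw.1 x y)).deriv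
    rw [hG, hH]
    simp only [Pi.mul_apply]
    ring
  rw [key]
  -- split the exact form and conclude
  have hGsmooth : ContDiff ℝ ∞ (Gfun c₁ f u g v h w) := by
    unfold Gfun
    exact (((hf.1.mul (hh.1.mul hv.1)).add (hf.1.mul (hg.1.mul hw.1))).sub
        (contDiff_const.mul (hg.1.mul (hh.1.mul hu.1)))).add
      (contDiff_const.mul (((hh.1.mul hsfxx).sub (hshx.mul hsfx)).add (hshxx.mul hf.1)))
  have hHsmooth : ContDiff ℝ ∞ (Hfun f w) := hf.1.mul hw.1
  have hGper : ∀ p : ℝ × ℝ, Gfun c₁ f u g v h w (p.1 + 2 * π, p.2) = Gfun c₁ f u g v h w p := by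
    intro p
    simp only [Gfun, hf.2.1 p, hg.2.1 p, hh.2.1 p, hu.2.1 p, hv.2.1 p, hw.2.1 p,
      pdx_perX hf.2.1 p, pdx_perX hh.2.1 p,
      pdx_perX (pdx_perX hf.2.1) p, pdx_perX (pdx_perX hh.2.1) p]
  have hHper : ∀ p : ℝ × ℝ, Hfun f w (p.1, p.2 + 2 * π) = Hfun f w p := by
    intro p
    simp only [Hfun, hf.2.2 p, hw.2.2 p]
  have esplit : integ2 (fun p : ℝ × ℝ => pdx (Gfun c₁ f u g v h w) p + c₂ * pdy (Hfun f w) p)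
      = integ2 (pdx (Gfun c₁ f u g v h w)) + integ2 (fun p => c₂ * pdy (Hfun f w) p) :=
    integ2_add (pdx_contDiff hGsmooth).continuous
      (continuous_const.mul (pdy_contDiff hHsmooth).continuous)
  have esm : integ2 (fun p : ℝ × ℝ => c₂ * pdy (Hfun f w) p)
      = c₂ * integ2 (pdy (Hfun f w)) := integ2_smul c₂
  rw [esplit, esm, integ2_pdx_zero hGsmooth hGper, integ2_pdy_zero hHsmooth hHper]
  ring
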